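/- Let V be a vector space over ℂ, m a positive natural number, and A₁, …, A_m : V → V linear maps. Let λ ∈ ℂ with λ ≠ 0, let k ∈ {0, …, m−1}, and set λ_k := λ · exp(2πik/m). Let v ∈ V and define v₁ := v and v_j := A_{j−1}(v_{j−1}) for j = 2, …, m. Define the block-cyclic linear map M : V^m → V^m by M(x₁, …, x_m) := (A_m(x_m), A₁(x₁), …, A_{m−1}(x_{m−1})), and set w := (v₁, λ_k^{−1} v₂, …, λ_k^{−(m−1)} v_m) ∈ V^m. Then M(w) = λ_k · w if and only if (A_m ∘ A_{m−1} ∘ ⋯ ∘ A₁)(v) = λ^m · v. -/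

import Mathlib

/-- eigenvalues of the block-cyclic unrolled map.
With `0`-indexed maps `A 0, …, A (m-1)` (standing for `A₁, …, A_m`), the
vector `w i = λ_k^{-i} • v_{i+1}`, where `v₁ := v` and `v_{j+1} := A_j v_j`,
is an eigenvector of the block-cyclic map
`M(x) i = A (i-1) (x (i-1))` (cyclic indices) with eigenvalue
`λ_k = λ·exp(2πik/m)` iff `v` is an eigenvector of the full cycle
`A_m ∘ ⋯ ∘ A₁` with eigenvalue `λ^m`. -/
theorem block_cyclic_eigenvector_iff
    (V : Type*) [AddCommGroup V] [Module ℂ V]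
    (m : ℕ) [NeZero m] (A : Fin m → V →ₗ[ℂ] V)
    (lam : ℂ) (hlam : lam ≠ 0) (k : Fin m)
    (lamk : ℂ) (hlamk : lamk = lam * Complex.exp (2 * Real.pi * Complex.I * k / m))
    (v : V) (u : Fin m → V)
    (hu0 : u 0 = v)
    (hu : ∀ i : Fin m, (i : ℕ) + 1 < m → u (i + 1) = A i (u i))
    (w : Fin m → V) (hw : ∀ i : Fin m, w i = lamk ^ (-(i : ℤ)) • u i) :
    ((fun i : Fin m => A (i - 1) (w (i - 1))) = fun i : Fin m => lamk • w i) ↔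
      A ⟨m - 1, Nat.sub_lt (Nat.pos_of_ne_zero (NeZero.ne m)) one_pos⟩
          (u ⟨m - 1, Nat.sub_lt (Nat.pos_of_ne_zero (NeZero.ne m)) one_pos⟩)
        = lam ^ m • v := by
  have hmpos : 0 < m := Nat.pos_of_ne_zero (NeZero.ne m)
  have hlamk0 : lamk ≠ 0 := by
    rw [hlamk]; exact mul_ne_zero hlam (Complex.exp_ne_zero _)
  have hpow : lamk ^ (m : ℤ) = lam ^ m := by
    have hm : (m:ℂ) ≠ 0 := Nat.cast_ne_zero.mpr (NeZero.ne m)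
    rw [zpow_natCast, hlamk, mul_pow, ← Complex.exp_nat_mul]
    have h : (m:ℂ) * (2 * Real.pi * Complex.I * k / m) = (k:ℕ) * (2 * Real.pi * Complex.I) := by
      field_simp
    rw [h, show ((k:ℕ):ℂ) * (2 * Real.pi * Complex.I)
        = ((k:ℕ):ℤ) * (2 * Real.pi * Complex.I) by push_cast; ring,
      Complex.exp_int_mul_two_pi_mul_I, mul_one]
  set L : Fin m := ⟨m - 1, Nat.sub_lt hmpos one_pos⟩ with hL
  have hsub0 : (0 : Fin m) - 1 = L := by
    ext
    rw [Fin.sub_def]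
    simp only [Fin.val_zero, Fin.val_one', hL, Nat.zero_add]
    rcases eq_or_lt_of_le (Nat.succ_le_of_lt hmpos) with h | h
    · simp [← h]
    · rw [Nat.mod_eq_of_lt h, Nat.mod_eq_of_lt (by omega)]; omega
  have hsubS : ∀ (j : ℕ) (h : j + 1 < m),
      (⟨j + 1, h⟩ : Fin m) - 1 = ⟨j, by omega⟩ := by
    intro j h
    ext
    rw [Fin.sub_def]
    simp only [Fin.val_one', Nat.mod_eq_of_lt (show 1 < m by omega)]
    rw [show m - 1 + (j + 1) = m + j by omega, Nat.add_mod_left, Nat.mod_eq_of_lt (by omega)]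
  have haddS : ∀ (j : ℕ) (h : j + 1 < m),
      (⟨j, by omega⟩ : Fin m) + 1 = ⟨j + 1, h⟩ := by
    intro j h
    ext
    rw [Fin.add_def]
    simp only [Fin.val_one', Nat.mod_eq_of_lt (show 1 < m by omega)]
    rw [Nat.mod_eq_of_lt (by omega)]
  constructor
  · intro h
    have h0 := congrFun h 0
    simp only [hsub0, hw, hu0, Fin.val_zero, Nat.cast_zero, neg_zero, zpow_zero, one_smul,
      map_smul] at h0
    rw [zpow_neg, inv_smul_eq_iff₀ (zpow_ne_zero _ hlamk0)] at h0
    rw [h0, smul_smul, ← zpow_add_one₀ hlamk0, ← hpow]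
    congr 1
    have : ((L : ℕ) : ℤ) = (m : ℤ) - 1 := by simp only [hL]; omega
    rw [this]; ring
  · intro h
    funext i
    rcases i with ⟨iv, hi⟩
    cases iv with
    | zero =>
      show A ((⟨0, hi⟩ : Fin m) - 1) (w ((⟨0, hi⟩ : Fin m) - 1)) = lamk • w ⟨0, hi⟩
      have h00 : (⟨0, hi⟩ : Fin m) = 0 := rfl
      rw [h00, hsub0, hw, hw, hu0, map_smul, h, ← hpow]
      simp only [Fin.val_zero, Nat.cast_zero, neg_zero, zpow_zero, one_smul]
      rw [smul_smul, ← zpow_add₀ hlamk0,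
        show -((L : ℕ) : ℤ) + (m : ℤ) = 1 by simp only [hL]; omega, zpow_one]
    | succ j =>
      show A ((⟨j + 1, hi⟩ : Fin m) - 1) (w ((⟨j + 1, hi⟩ : Fin m) - 1))
        = lamk • w (⟨j + 1, hi⟩ : Fin m)
      have huj : u ⟨j + 1, hi⟩ = A ⟨j, by omega⟩ (u ⟨j, by omega⟩) := by
        rw [← haddS j hi]; exact hu ⟨j, by omega⟩ hi
      rw [hsubS j hi, hw, hw, huj, map_smul, smul_smul]
      congr 1
      rw [show lamk * lamk ^ (-(((⟨j + 1, hi⟩ : Fin m) : ℕ) : ℤ))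
          = lamk ^ (1 + -(((j : ℕ) + 1 : ℕ) : ℤ)) by rw [zpow_add₀ hlamk0, zpow_one]]
      congr 1
      push_cast
      ring
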